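/- In the supertranslation Lie superalgebra 𝒯 = V ⊕ S₊ over ℍ (V = h₂(ℍ) even, S₊ = ℍ² odd, with the only nonzero bracket being the spinor bracket ψ·φ ∈ V), the even (1,2)-form α defined by α(ψ, φ, A) = g(ψ·φ, A) is a nontrivial 3-cocycle with values in the trivial representation ℝ: dα = 0 (equivalent to the 3-ψ's rule by polarization) and α ≠ dθ for any invariant 2-cochain θ. -/

import Mathlib

open Matrix

/-- The outer product `ψφ†`. -/
noncomputable def qouter (ψ φ : Fin 2 → Quaternion ℝ) : Matrix (Fin 2) (Fin 2) (Quaternion ℝ) :=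
  Matrix.of fun i j => ψ i * star (φ j)

/-- Trace reversal `M̃ = M - (tr M)·1`. -/
noncomputable def qtilde (M : Matrix (Fin 2) (Fin 2) (Quaternion ℝ)) :
    Matrix (Fin 2) (Fin 2) (Quaternion ℝ) :=
  M - (Matrix.trace M) • (1 : Matrix (Fin 2) (Fin 2) (Quaternion ℝ))

/-- The Minkowski metric `g(A,B) = (1/2) Re tr(A B̃)` on `V = h₂(ℍ)`. -/
noncomputable def gMink (A B : Matrix (Fin 2) (Fin 2) (Quaternion ℝ)) : ℝ :=
  (1 / 2) * ((A * qtilde B).trace).re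

/-- The symmetric spinor bracket `ψ·φ = (ψφ† + φψ†)~` of the supertranslation
algebra `𝒯 = V ⊕ S₊` over ℍ. -/
noncomputable def qdot (ψ φ : Fin 2 → Quaternion ℝ) : Matrix (Fin 2) (Fin 2) (Quaternion ℝ) :=
  qtilde (qouter ψ φ + qouter φ ψ)

set_option maxHeartbeats 4000000

/-- In the supertranslation algebra `𝒯 = V ⊕ S₊` over ℍ, the even `(1,2)`-form
`α(ψ, φ, A) = g(ψ·φ, A)` is a nontrivial 3-cocycle valued in the trivial
representation ℝ.  Closedness `dα = 0` is the polarized 3-ψ's rule: the totally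
symmetrized pairing `g(ψ·φ, χ·θ) + g(ψ·χ, φ·θ) + g(ψ·θ, φ·χ)` vanishes.
Nontriviality: there is no 2-cochain `θ` with `dθ = α`; since only the `(2,0)`
component `ω` of `θ` can contribute, this says there is no antisymmetric bilinear
`ω` on `V` with `α(ψ, φ, A) = -ω(ψ·φ, A)` for all spinors `ψ, φ` and vectors `A`. -/
theorem alpha_is_nontrivial_three_cocycle :
    (∀ ψ φ χ θ : Fin 2 → Quaternion ℝ,
      gMink (qdot ψ φ) (qdot χ θ) + gMink (qdot ψ χ) (qdot φ θ) +
        gMink (qdot ψ θ) (qdot φ χ) = 0) ∧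
    ¬ ∃ ω : Matrix (Fin 2) (Fin 2) (Quaternion ℝ) →
        Matrix (Fin 2) (Fin 2) (Quaternion ℝ) → ℝ,
      (∀ A B : Matrix (Fin 2) (Fin 2) (Quaternion ℝ),
        A.IsHermitian → B.IsHermitian → ω A B = -ω B A) ∧
      (∀ (ψ φ : Fin 2 → Quaternion ℝ) (A : Matrix (Fin 2) (Fin 2) (Quaternion ℝ)),
        A.IsHermitian → gMink (qdot ψ φ) A = -ω (qdot ψ φ) A) := by
  constructor
  · intro ψ φ χ θ
    simp only [gMink, qdot, qtilde, qouter, Matrix.trace_fin_two, Matrix.mul_apply,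
      Fin.sum_univ_two, Matrix.sub_apply, Matrix.add_apply, Matrix.smul_apply,
      Matrix.one_apply, Matrix.of_apply, smul_eq_mul,
      if_true, show ((0:Fin 2)=1) = False by simp, show ((1:Fin 2)=0) = False by simp,
      if_false, mul_one, mul_zero, sub_zero]
    simp only [Quaternion.re_mul, Quaternion.re_add, Quaternion.re_sub, Quaternion.re_star,
      Quaternion.imI_mul, Quaternion.imI_add, Quaternion.imI_sub, Quaternion.imI_star,
      Quaternion.imJ_mul, Quaternion.imJ_add, Quaternion.imJ_sub, Quaternion.imJ_star,
      Quaternion.imK_mul, Quaternion.imK_add, Quaternion.imK_sub, Quaternion.imK_star]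
    ring
  · rintro ⟨ω, hskew, hcob⟩
    have hA : qdot ![1,0] ![0,1] = Matrix.of ![![0,1],![1,0]] := by
      refine Matrix.ext fun i j => ?_
      fin_cases i <;> fin_cases j <;>
        simp only [qdot, qtilde, qouter, Matrix.trace_fin_two, Matrix.sub_apply,
          Matrix.add_apply, Matrix.smul_apply, Matrix.one_apply, Matrix.of_apply,
          Matrix.cons_val_zero, Matrix.cons_val_one, Matrix.head_cons, smul_eq_mul,
          star_zero, star_one, mul_zero, zero_mul, mul_one, one_mul, add_zero, zero_add,
          if_true, show ((0:Fin 2)=1) = False by simp, show ((1:Fin 2)=0) = False by simp,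
          if_false, sub_zero] <;> simp
    have hherm : (qdot ![1,0] ![0,1]).IsHermitian := by
      rw [hA]
      refine Matrix.ext fun i j => ?_
      fin_cases i <;> fin_cases j <;> simp [Matrix.conjTranspose_apply]
    have hg : gMink (qdot ![1,0] ![0,1]) (qdot ![1,0] ![0,1]) = 1 := by
      rw [hA]
      simp only [gMink, qtilde, Matrix.trace_fin_two, Matrix.mul_apply, Fin.sum_univ_two,
        Matrix.sub_apply, Matrix.smul_apply, Matrix.one_apply, Matrix.of_apply,
        Matrix.cons_val_zero, Matrix.cons_val_one, Matrix.head_cons, smul_eq_mul]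
      norm_num [show ((2:Quaternion ℝ)).re = (2:ℝ) from rfl]
    have h0 : ω (qdot ![1,0] ![0,1]) (qdot ![1,0] ![0,1]) = 0 := by
      have := hskew _ _ hherm hherm
      linarith
    have := hcob ![1,0] ![0,1] (qdot ![1,0] ![0,1]) hherm
    rw [hg, h0] at this
    norm_num at this
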